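/- Every face F of the staircase complex 𝔅(P,n) is contained in T_*(φ) for some isotone map φ ∈ Hom(P,[n]). -/
import Mathlib


variable {P : Type*} [PartialOrder P] [Fintype P]

/-- `T_*(φ) = {(p,i) | φ q ≤ i ≤ φ p for all q < p}`. -/
def Tstar {n : ℕ} (φ : P → Fin n) : Set (P × Fin n) :=
  {x | x.2 ≤ φ x.1 ∧ ∀ q : P, q < x.1 → φ q ≤ x.2}

/-- A staircase face is a subset of P × [n] containing no pair (p,i), (q,j) with
p < q in P and i > j in [n]; these are the faces of the staircase complex 𝔅(P,n). -/
def IsStaircaseFace {n : ℕ} (F : Set (P × Fin n)) : Prop :=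
  ∀ x ∈ F, ∀ y ∈ F, x.1 < y.1 → ¬ y.2 < x.2

/-- Every face F of the staircase complex 𝔅(P,n) is contained in T_*(φ) for some
isotone map φ ∈ Hom(P,[n]). -/
theorem stmt4 {n : ℕ} (hn : 0 < n) (F : Set (P × Fin n)) (hF : IsStaircaseFace F) :
    ∃ φ : P → Fin n, Monotone φ ∧ F ⊆ Tstar φ := by
  classical
  set g : P → (P × Fin n) → ℕ := fun p x => if x ∈ F ∧ x.1 ≤ p then x.2.val else 0 with hg
  have hlt : ∀ p : P, Finset.univ.sup (g p) < n := by
    intro p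
    rw [Finset.sup_lt_iff hn]
    intro x _
    simp only [hg]
    split
    · exact x.2.isLt
    · exact hn
  refine ⟨fun p => ⟨Finset.univ.sup (g p), hlt p⟩, ?_, ?_⟩
  · intro p q hpq
    show Finset.univ.sup (g p) ≤ Finset.univ.sup (g q)
    apply Finset.sup_mono_fun
    intro x _
    simp only [hg]
    split
    · rename_i h
      rw [if_pos ⟨h.1, le_trans h.2 hpq⟩]
    · exact Nat.zero_le _
  · rintro ⟨p, i⟩ hpi
    constructor
    · show i.val ≤ Finset.univ.sup (g p)
      have := Finset.le_sup (f := g p) (Finset.mem_univ (p, i))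
      simpa [hg, hpi] using this
    · intro q hq
      show Finset.univ.sup (g q) ≤ i.val
      apply Finset.sup_le
      intro x _
      simp only [hg]
      split
      · rename_i h
        by_contra hc
        push_neg at hc
        exact hF x h.1 (p, i) hpi (lt_of_le_of_lt h.2 hq) hc
      · exact Nat.zero_le _
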